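/- arXiv:2002.03649 — 4 statements merged into one kernel-verified Lean document; each statement's English description precedes it below -/
import Mathlib

section
/- If G is a path or a cycle on n vertices, then G has an acyclic matching of size at least (n-2)/2. -/
open SimpleGraph

/-- `M` is a matching in `G`: a set of edges of `G`, pairwise disjoint. -/
def IsMatchingSet {V : Type*} (G : SimpleGraph V) (M : Finset (Sym2 V)) : Prop :=
  (∀ e ∈ M, e ∈ G.edgeSet) ∧
    ∀ e ∈ M, ∀ f ∈ M, e ≠ f → ∀ v : V, v ∈ e → v ∉ f

/-- The set of vertices incident to an edge of `M`. -/
def mVerts {V : Type*} (M : Finset (Sym2 V)) : Set V := {v | ∃ e ∈ M, v ∈ e}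

/-- `M` is an acyclic matching in `G`: the subgraph induced by the covered vertices
is a forest. -/
def IsAcyclicMatching {V : Type*} (G : SimpleGraph V) (M : Finset (Sym2 V)) : Prop :=
  IsMatchingSet G M ∧ (G.induce (mVerts M)).IsAcyclic

/-- `M` is an induced matching in `G`: the subgraph induced by the covered vertices
is 1-regular, i.e. every edge between covered vertices belongs to `M`. -/
def IsInducedMatching {V : Type*} (G : SimpleGraph V) (M : Finset (Sym2 V)) : Prop :=
  IsMatchingSet G M ∧ ∀ v w : V, v ∈ mVerts M → w ∈ mVerts M → G.Adj v w → s(v, w) ∈ M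

lemma walk_support_getElem {V : Type*} {G : SimpleGraph V} {u v : V} (p : G.Walk u v) :
    ∀ (i : ℕ) (h : i < p.support.length), p.support[i] = p.getVert i := by
  induction p with
  | nil => intro i h; simp at h; subst h; simp
  | cons hadj q ih =>
    intro i h
    cases i with
    | zero => simp
    | succ j =>
      simp only [Walk.support_cons, List.getElem_cons_succ, Walk.getVert_cons_succ]
      exact ih j (by simpa [Walk.length_support] using h)

lemma acyclic_of_embedding {A B : Type*} {G : SimpleGraph A} {H : SimpleGraph B}
    (f : G ↪g H) (h : H.IsAcyclic) : G.IsAcyclic := by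
  intro v c hc
  exact h (c.map f.toHom) (hc.map f.injective)

lemma pathGraph_isAcyclic (n : ℕ) : (pathGraph n).IsAcyclic := by
  intro v c hc
  -- maximal vertex of the support
  have hne : c.support.toFinset.Nonempty := ⟨v, by simp⟩
  set u := c.support.toFinset.max' hne with hu
  have hus : u ∈ c.support := by
    have := c.support.toFinset.max'_mem hne
    simpa using this
  have hmax : ∀ w ∈ c.support, w.val ≤ u.val := by
    intro w hw
    exact Fin.le_iff_val_le_val.mp (c.support.toFinset.le_max' w (by simpa using hw))
  set c' := c.rotate u hus with hc'def
  have hc' : c'.IsCycle := hc.rotate hus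
  have hmax' : ∀ w ∈ c'.support, w.val ≤ u.val := by
    intro w hw
    apply hmax
    have hperm : c'.support.tail ~r c.support.tail := Walk.support_rotate c u hus
    rcases (Walk.support_eq_cons c').symm ▸ hw with hw'
    rw [Walk.support_eq_cons c'] at hw'
    rcases List.mem_cons.mp hw' with rfl | hw''
    · exact hus
    · have : w ∈ c.support.tail := hperm.perm.mem_iff.mp hw''
      exact List.mem_of_mem_tail this
  set L := c'.length with hL
  have h3 : 3 ≤ L := hc'.three_le_length
  set a := c'.getVert 1 with ha
  set b := c'.getVert (L - 1) with hb
  have h1 : (pathGraph n).Adj u a := by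
    have := c'.adj_getVert_succ (i := 0) (by omega)
    simpa using this
  have h2 : (pathGraph n).Adj b u := by
    have := c'.adj_getVert_succ (i := L - 1) (by omega)
    rw [show L - 1 + 1 = L by omega, hL, Walk.getVert_length] at this
    exact this
  have hamem : a ∈ c'.support := Walk.mem_support_iff_exists_getVert.mpr ⟨1, rfl, by omega⟩
  have hbmem : b ∈ c'.support := Walk.mem_support_iff_exists_getVert.mpr ⟨L - 1, rfl, by omega⟩
  have hav : a.val ≤ u.val := hmax' a hamem
  have hbv : b.val ≤ u.val := hmax' b hbmem
  have hane : a ≠ u := fun h => h1.ne (h ▸ rfl)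
  have ha1 : a.val + 1 = u.val := by
    rcases pathGraph_adj.mp h1 with h | h
    · omega
    · omega
  have hb1 : b.val + 1 = u.val := by
    rcases pathGraph_adj.mp h2 with h | h
    · omega
    · omega
  have hab : a = b := Fin.val_injective (by omega)
  -- contradiction with nodup of support tail
  have hnodup : c'.support.tail.Nodup := hc'.2
  have hlen : c'.support.length = L + 1 := by simp [Walk.length_support, hL]
  have htlen : c'.support.tail.length = L := by simp [List.length_tail, hlen]
  have e1 : c'.support.tail[0]'(by omega) = a := by
    rw [List.getElem_tail]
    rw [walk_support_getElem c' 1 (by omega)]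
  have e2 : c'.support.tail[L-2]'(by omega) = b := by
    rw [List.getElem_tail]
    rw [walk_support_getElem c' (L-2+1) (by omega)]
    congr 1
    omega
  have := (List.Nodup.getElem_inj_iff hnodup (i := 0) (j := L-2) (hi := by omega) (hj := by omega)).mp (by rw [e1, e2, hab])
  omega


variable {n k : ℕ}

/-- model matching: edges {2i, 2i+1} for i < k -/
def modelM (n k : ℕ) (h : 2 * k ≤ n) : Finset (Sym2 (Fin n)) :=
  (Finset.range k).attach.image
    (fun i => s((⟨2 * i.1, by have := Finset.mem_range.mp i.2; omega⟩ : Fin n),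
                (⟨2 * i.1 + 1, by have := Finset.mem_range.mp i.2; omega⟩ : Fin n)))

lemma mem_modelM {h : 2 * k ≤ n} {e : Sym2 (Fin n)} :
    e ∈ modelM n k h ↔ ∃ i, ∃ hi : i < k,
      e = s((⟨2 * i, by omega⟩ : Fin n), (⟨2 * i + 1, by omega⟩ : Fin n)) := by
  simp only [modelM, Finset.mem_image, Finset.mem_attach, true_and, Subtype.exists,
    Finset.mem_range]
  constructor
  · rintro ⟨i, hi, rfl⟩; exact ⟨i, hi, rfl⟩
  · rintro ⟨i, hi, rfl⟩; exact ⟨i, hi, rfl⟩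

lemma card_modelM (h : 2 * k ≤ n) : (modelM n k h).card = k := by
  have hinj : Set.InjOn (fun i : {x // x ∈ Finset.range k} =>
      s((⟨2 * i.1, by have := Finset.mem_range.mp i.2; omega⟩ : Fin n),
        (⟨2 * i.1 + 1, by have := Finset.mem_range.mp i.2; omega⟩ : Fin n)))
      (Finset.range k).attach := by
    intro i _ j _ hij
    simp only [Sym2.eq, Sym2.rel_iff', Prod.mk.injEq, Prod.swap_prod_mk, Fin.mk.injEq] at hij
    ext
    omega
  rw [modelM, Finset.card_image_of_injOn hinj, Finset.card_attach, Finset.card_range]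

lemma modelM_isMatchingSet (h : 2 * k ≤ n) {G : SimpleGraph (Fin n)}
    (hadj : ∀ a b : Fin n, b.val < 2 * k → a.val + 1 = b.val → G.Adj a b) :
    IsMatchingSet G (modelM n k h) := by
  constructor
  · intro e he
    obtain ⟨i, hi, rfl⟩ := mem_modelM.mp he
    rw [SimpleGraph.mem_edgeSet]
    exact hadj _ _ (by simp; omega) (by simp)
  · intro e he f hf hef v hv hv'
    obtain ⟨i, hi, rfl⟩ := mem_modelM.mp he
    obtain ⟨j, hj, rfl⟩ := mem_modelM.mp hf
    have hij : i ≠ j := by rintro rfl; exact hef rfl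
    rw [Sym2.mem_iff] at hv hv'
    have h1 : v.val = 2*i ∨ v.val = 2*i+1 := by
      rcases hv with rfl | rfl <;> simp
    have h2 : v.val = 2*j ∨ v.val = 2*j+1 := by
      rcases hv' with rfl | rfl <;> simp
    omega

lemma mVerts_modelM (h : 2 * k ≤ n) :
    mVerts (modelM n k h) = {v : Fin n | v.val < 2 * k} := by
  ext v
  simp only [mVerts, Set.mem_setOf_eq]
  constructor
  · rintro ⟨e, he, hv⟩
    obtain ⟨i, hi, rfl⟩ := mem_modelM.mp he
    rw [Sym2.mem_iff] at hv
    rcases hv with rfl | rfl <;> simp <;> omega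
  · intro hv
    refine ⟨_, mem_modelM.mpr ⟨v.val / 2, by omega, rfl⟩, ?_⟩
    rw [Sym2.mem_iff]
    rcases Nat.even_or_odd v.val with he | ho
    · left
      rw [Nat.even_iff] at he
      exact Fin.ext (by simp only [Fin.val_mk]; omega)
    · right
      rw [Nat.odd_iff] at ho
      exact Fin.ext (by simp only [Fin.val_mk]; omega)

lemma mod_helper {x m : ℕ} (h : x < 2 * m) : x % m = x ∨ x % m = x - m := by
  rcases lt_or_ge x m with h' | h'
  · left; exact Nat.mod_eq_of_lt h'
  · right; rw [Nat.mod_eq_sub_mod h', Nat.mod_eq_of_lt (by omega)]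

lemma cycle_adj_of_succ {n : ℕ} (a b : Fin n) (hab : a.val + 1 = b.val) :
    (cycleGraph n).Adj a b := by
  have hb := b.isLt
  have ha := a.isLt
  have h2 : 2 ≤ n := by omega
  rw [cycleGraph_adj']
  right
  simp only [Fin.sub_def]
  rw [show n - a.val + b.val = n + 1 by omega, Nat.add_mod_left]
  exact Nat.mod_eq_of_lt (by omega)

lemma model_path (n : ℕ) :
    ∃ M : Finset (Sym2 (Fin n)), IsAcyclicMatching (pathGraph n) M ∧ M.card = n / 2 := by
  have h : 2 * (n / 2) ≤ n := by omega
  refine ⟨modelM n (n / 2) h, ⟨modelM_isMatchingSet h ?_, ?_⟩, card_modelM h⟩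
  · intro a b _ hab
    exact pathGraph_adj.mpr (Or.inl hab)
  · exact acyclic_of_embedding ⟨⟨Subtype.val, Subtype.val_injective⟩, Iff.rfl⟩
      (pathGraph_isAcyclic n)

lemma model_cycle (n : ℕ) :
    ∃ M : Finset (Sym2 (Fin n)), IsAcyclicMatching (cycleGraph n) M ∧ M.card = (n - 1) / 2 := by
  have h : 2 * ((n - 1) / 2) ≤ n := by omega
  have hk : 2 * ((n - 1) / 2) ≤ n - 1 := by omega
  set k := (n - 1) / 2 with hkdef
  refine ⟨modelM n k h, ⟨modelM_isMatchingSet h ?_, ?_⟩, card_modelM h⟩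
  · intro a b _ hab
    exact cycle_adj_of_succ a b hab
  · rw [mVerts_modelM h]
    refine acyclic_of_embedding ⟨⟨Subtype.val, Subtype.val_injective⟩, ?_⟩
      (pathGraph_isAcyclic n)
    rintro ⟨x, hx2⟩ ⟨y, hy2⟩
    simp only [Set.mem_setOf_eq] at hx2 hy2
    have hx := x.isLt
    have hy := y.isLt
    simp only [Function.Embedding.coeFn_mk, comap_adj]
    constructor
    · intro hadj
      rcases pathGraph_adj.mp hadj with h1 | h1
      · exact cycle_adj_of_succ x y h1
      · exact (cycle_adj_of_succ y x h1).symm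
    · intro hadj
      rw [pathGraph_adj]
      have hadj' := cycleGraph_adj'.mp hadj
      simp only [Function.Embedding.coe_subtype, Function.Embedding.coeFn_mk,
        Fin.sub_def] at hadj'
      rcases hadj' with h1 | h1
      · rcases mod_helper (show n - y.val + x.val < 2 * n by omega) with hm | hm <;>
          rw [hm] at h1 <;> omega
      · rcases mod_helper (show n - x.val + y.val < 2 * n by omega) with hm | hm <;>
          rw [hm] at h1 <;> omega

lemma transport {V W : Type*} {G : SimpleGraph V} {H : SimpleGraph W}
    (e : G ≃g H) {M : Finset (Sym2 W)} (hM : IsAcyclicMatching H M) :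
    ∃ M' : Finset (Sym2 V), IsAcyclicMatching G M' ∧ M'.card = M.card := by
  classical
  have hinj : Function.Injective (Sym2.map ⇑e.symm) := Sym2.map.injective e.symm.injective
  refine ⟨M.image (Sym2.map ⇑e.symm), ⟨⟨?_, ?_⟩, ?_⟩, Finset.card_image_of_injective M hinj⟩
  · intro e' he'
    obtain ⟨f, hf, rfl⟩ := Finset.mem_image.mp he'
    induction f using Sym2.ind with
    | _ a b =>
      rw [Sym2.map_pair_eq, SimpleGraph.mem_edgeSet]
      exact e.symm.map_adj_iff.mpr (H.mem_edgeSet.mp (hM.1.1 _ hf))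
  · intro e1 he1 e2 he2 hne v hv hv'
    obtain ⟨f1, hf1, rfl⟩ := Finset.mem_image.mp he1
    obtain ⟨f2, hf2, rfl⟩ := Finset.mem_image.mp he2
    have hf12 : f1 ≠ f2 := by rintro rfl; exact hne rfl
    obtain ⟨w1, hw1, hw1'⟩ := Sym2.mem_map.mp hv
    obtain ⟨w2, hw2, hw2'⟩ := Sym2.mem_map.mp hv'
    have : w1 = w2 := e.symm.injective (hw1'.trans hw2'.symm)
    exact hM.1.2 f1 hf1 f2 hf2 hf12 w1 hw1 (this ▸ hw2)
  · have hmem : ∀ x : V, x ∈ mVerts (M.image (Sym2.map ⇑e.symm)) → (e x : W) ∈ mVerts M := by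
      intro x hx
      obtain ⟨e', he', hxe⟩ := hx
      obtain ⟨f, hf, rfl⟩ := Finset.mem_image.mp he'
      obtain ⟨w, hw, hw'⟩ := Sym2.mem_map.mp hxe
      refine ⟨f, hf, ?_⟩
      have : e x = w := by rw [← hw']; simp
      rwa [this]
    refine acyclic_of_embedding
      ⟨⟨fun x => ⟨e x.1, hmem x.1 x.2⟩, ?_⟩, ?_⟩ hM.2
    · intro x y hxy
      exact Subtype.ext (e.injective (congrArg Subtype.val hxy))
    · intro x y
      simp only [Function.Embedding.coeFn_mk, comap_adj]
      exact e.map_adj_iff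

theorem path_or_cycle_acyclicMatching {V : Type*} [Fintype V] (G : SimpleGraph V) (n : ℕ)
    (hn : Fintype.card V = n)
    (h : Nonempty (G ≃g SimpleGraph.pathGraph n) ∨ Nonempty (G ≃g SimpleGraph.cycleGraph n)) :
    ∃ M : Finset (Sym2 V), IsAcyclicMatching G M ∧ ((n : ℝ) - 2) / 2 ≤ M.card := by
  rcases h with he | he <;> obtain ⟨e⟩ := he
  · obtain ⟨M, hM, hcard⟩ := model_path n
    obtain ⟨M', hM', hcard'⟩ := transport e hM
    refine ⟨M', hM', ?_⟩
    rw [hcard', hcard, div_le_iff₀ (by norm_num : (0:ℝ) < 2)]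
    have h2 : n ≤ 2 * (n / 2) + 2 := by omega
    have := (Nat.cast_le (α := ℝ)).mpr h2
    push_cast at this
    linarith
  · obtain ⟨M, hM, hcard⟩ := model_cycle n
    obtain ⟨M', hM', hcard'⟩ := transport e hM
    refine ⟨M', hM', ?_⟩
    rw [hcard', hcard, div_le_iff₀ (by norm_num : (0:ℝ) < 2)]
    have h2 : n ≤ 2 * ((n - 1) / 2) + 2 := by omega
    have := (Nat.cast_le (α := ℝ)).mpr h2
    push_cast at this
    linarith
end

section
/- Every graph G with m edges and maximum degree at most Δ ≥ 1 has an acyclic matching of size at least m/Δ². -/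
open SimpleGraph

section Auxiliary

variable {V : Type*} {G : SimpleGraph V}

/-- No cycle of `G` has all its vertices in `S`. -/
def NoCycleIn (G : SimpleGraph V) (S : Set V) : Prop :=
  ∀ (v : V) (c : G.Walk v v), c.IsCycle → ¬ (∀ u ∈ c.support, u ∈ S)

lemma noCycleIn_empty : NoCycleIn G (∅ : Set V) := by
  intro v c _ hsub
  exact absurd (hsub v c.start_mem_support) (by simp)

lemma induce_isAcyclic_of_noCycleIn {S : Set V} (h : NoCycleIn G S) :
    (G.induce S).IsAcyclic := by
  intro v c hc
  have hinj : Function.Injective (SimpleGraph.Embedding.induce S (G := G)) :=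
    (SimpleGraph.Embedding.induce S (G := G)).injective
  have hc' : (c.map (SimpleGraph.Embedding.induce S (G := G)).toHom).IsCycle :=
    hc.map hinj
  refine h _ _ hc' ?_
  intro u hu
  rw [SimpleGraph.Walk.support_map] at hu
  rcases List.mem_map.mp hu with ⟨⟨w, hw⟩, _, rfl⟩
  exact hw

lemma cycle_two_nbrs {v u : V} {c : G.Walk v v} (hc : c.IsCycle) (hu : u ∈ c.support) :
    ∃ a b : V, a ≠ b ∧ G.Adj u a ∧ G.Adj u b ∧ a ∈ c.support ∧ b ∈ c.support := by
  classical
  have hd : (c.rotate u hu).IsCycle := hc.rotate hu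
  have hsup : ∀ x, x ∈ (c.rotate u hu).support → x ∈ c.support := by
    intro x hx
    rw [SimpleGraph.Walk.support_eq_cons] at hx
    rcases List.mem_cons.mp hx with rfl | hx
    · exact hu
    · have := (SimpleGraph.Walk.support_rotate c u hu).mem_iff.mp hx
      exact List.mem_of_mem_tail this
  set d := c.rotate u hu with hdef
  clear_value d
  cases d with
  | nil => exact absurd rfl hd.ne_nil
  | cons h p =>
    rename_i w
    have hpath : p.IsPath ∧ s(u, w) ∉ p.edges := (SimpleGraph.Walk.cons_isCycle_iff p h).mp hd
    have h3 : 3 ≤ p.length + 1 := by simpa using hd.three_le_length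
    have hrev : p.reverse.IsPath := hpath.1.reverse
    have hlenr : p.reverse.length = p.length := SimpleGraph.Walk.length_reverse p
    set r := p.reverse with hrdef
    have hsupr : r.support = p.support.reverse := SimpleGraph.Walk.support_reverse p
    have hlen3 : 2 ≤ r.length := by omega
    clear_value r
    cases r with
    | nil => simp at hlen3
    | cons h' q =>
      rename_i b
      have hq : q.IsPath ∧ u ∉ q.support := by
        have := (SimpleGraph.Walk.cons_isPath_iff h' q).mp hrev
        exact this
      have hbw : b ≠ w := by
        intro hbw
        subst hbw
        have : q = SimpleGraph.Walk.nil := (SimpleGraph.Walk.isPath_iff_eq_nil (p := q)).mp hq.1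
        subst this
        simp at hlen3
      have hbmem : b ∈ p.support := by
        have : b ∈ (SimpleGraph.Walk.cons h' q).support := by
          rw [SimpleGraph.Walk.support_cons]
          exact List.mem_cons_of_mem _ q.start_mem_support
        rw [hsupr, List.mem_reverse] at this
        exact this
      refine ⟨w, b, fun e => hbw e.symm, h, h', ?_, ?_⟩
      · refine hsup _ ?_
        rw [SimpleGraph.Walk.support_cons]
        exact List.mem_cons_of_mem _ p.start_mem_support
      · refine hsup _ ?_
        rw [SimpleGraph.Walk.support_cons]
        exact List.mem_cons_of_mem _ hbmem

end Auxiliary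

section PhiAux

open scoped Classical

variable {V : Type*} (Mv : Set V) (pk : Sym2 V → (V × V) × (V × V))

/-- The charging map used in the counting argument. -/
noncomputable def phiAux (p : V × V) : V × V × Option (Option V) :=
  if p.1 ∈ Mv then (p.1, p.2, none)
  else if p.2 ∈ Mv then (p.2, p.1, some none)
  else if (pk s(p.1, p.2)).1.2 = (pk s(p.1, p.2)).2.2 then
    (if p.1 = (pk s(p.1, p.2)).1.2 then ((pk s(p.1, p.2)).1.1, p.1, some (some p.2))
     else ((pk s(p.1, p.2)).2.1, p.2, some (some p.1)))
  else ((if p.1 = (pk s(p.1, p.2)).1.2 then (pk s(p.1, p.2)).1.1 else (pk s(p.1, p.2)).2.1),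
        p.1, some (some p.2))

variable {Mv pk}

lemma phiAux_one {x y : V} (hx : x ∈ Mv) : phiAux Mv pk (x, y) = (x, y, none) := by
  simp [phiAux, hx]

lemma phiAux_two {x y : V} (hx : x ∉ Mv) (hy : y ∈ Mv) :
    phiAux Mv pk (x, y) = (y, x, some none) := by
  dsimp only [phiAux]
  rw [if_neg hx, if_pos hy]

lemma phiAux_3a {x y : V} (hx : x ∉ Mv) (hy : y ∉ Mv)
    (hzw : (pk s(x, y)).1.2 = (pk s(x, y)).2.2) (hxz : x = (pk s(x, y)).1.2) :
    phiAux Mv pk (x, y) = ((pk s(x, y)).1.1, x, some (some y)) := by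
  dsimp only [phiAux]
  rw [if_neg hx, if_neg hy, if_pos hzw, if_pos hxz]

lemma phiAux_3b {x y : V} (hx : x ∉ Mv) (hy : y ∉ Mv)
    (hzw : (pk s(x, y)).1.2 = (pk s(x, y)).2.2) (hxz : ¬ x = (pk s(x, y)).1.2) :
    phiAux Mv pk (x, y) = ((pk s(x, y)).2.1, y, some (some x)) := by
  dsimp only [phiAux]
  rw [if_neg hx, if_neg hy, if_pos hzw, if_neg hxz]

lemma phiAux_4a {x y : V} (hx : x ∉ Mv) (hy : y ∉ Mv)
    (hzw : ¬ (pk s(x, y)).1.2 = (pk s(x, y)).2.2) (hxz : x = (pk s(x, y)).1.2) :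
    phiAux Mv pk (x, y) = ((pk s(x, y)).1.1, x, some (some y)) := by
  dsimp only [phiAux]
  rw [if_neg hx, if_neg hy, if_neg hzw, if_pos hxz]

lemma phiAux_4b {x y : V} (hx : x ∉ Mv) (hy : y ∉ Mv)
    (hzw : ¬ (pk s(x, y)).1.2 = (pk s(x, y)).2.2) (hxz : ¬ x = (pk s(x, y)).1.2) :
    phiAux Mv pk (x, y) = ((pk s(x, y)).2.1, x, some (some y)) := by
  dsimp only [phiAux]
  rw [if_neg hx, if_neg hy, if_neg hzw, if_neg hxz]

end PhiAux



theorem acyclicMatching_lower_bound_edges {V : Type*} [Fintype V] (G : SimpleGraph V)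
    [DecidableRel G.Adj] (Δ m : ℕ) (hΔ : 1 ≤ Δ) (hm : G.edgeFinset.card = m)
    (hdeg : ∀ v : V, G.degree v ≤ Δ) :
    ∃ M : Finset (Sym2 V), IsAcyclicMatching G M ∧ (m : ℝ) / (Δ : ℝ) ^ 2 ≤ M.card := by
  classical
  suffices h : ∃ M : Finset (Sym2 V), IsAcyclicMatching G M ∧ m ≤ Δ ^ 2 * M.card by
    obtain ⟨M, hM, hcard⟩ := h
    refine ⟨M, hM, ?_⟩
    rw [div_le_iff₀ (by positivity)]
    have : (m : ℝ) ≤ ((Δ ^ 2 * M.card : ℕ) : ℝ) := by exact_mod_cast hcard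
    push_cast at this ⊢
    linarith
  cases isEmpty_or_nonempty V with
  | inl hV =>
    refine ⟨∅, ⟨⟨fun e he => absurd he (Finset.notMem_empty e),
      fun e he => absurd he (Finset.notMem_empty e)⟩, ?_⟩, ?_⟩
    · have hemp : mVerts (∅ : Finset (Sym2 V)) = ∅ := by
        ext v; simp [mVerts]
      rw [hemp]
      exact induce_isAcyclic_of_noCycleIn noCycleIn_empty
    · have : G.edgeFinset = ∅ := by
        ext e
        simp only [Finset.notMem_empty, iff_false]
        intro he
        induction e with
        | _ a b => exact hV.false a
      rw [this] at hm
      simp at hm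
      omega
  | inr hne =>
    haveI : Inhabited V := Classical.inhabited_of_nonempty hne
    -- the family of acyclic matchings
    set Fam : Finset (Finset (Sym2 V)) :=
      Finset.univ.filter (fun N => IsMatchingSet G N ∧ NoCycleIn G (mVerts N)) with hFam
    have hFamNe : Fam.Nonempty := by
      refine ⟨∅, ?_⟩
      rw [hFam, Finset.mem_filter]
      refine ⟨Finset.mem_univ _, ⟨fun e he => absurd he (Finset.notMem_empty e),
        fun e he => absurd he (Finset.notMem_empty e)⟩, ?_⟩
      have hemp : mVerts (∅ : Finset (Sym2 V)) = ∅ := by ext v; simp [mVerts]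
      rw [hemp]
      exact noCycleIn_empty
    obtain ⟨M, hMFam, hMax⟩ := Finset.exists_max_image Fam Finset.card hFamNe
    rw [hFam, Finset.mem_filter] at hMFam
    obtain ⟨-, hmatch, hA⟩ := hMFam
    refine ⟨M, ⟨hmatch, induce_isAcyclic_of_noCycleIn hA⟩, ?_⟩
    -- partner of a covered vertex
    have hpartner : ∀ a ∈ mVerts M, ∃ b, b ∈ mVerts M ∧ G.Adj a b := by
      rintro a ⟨e, heM, hae⟩
      obtain ⟨b, rfl⟩ := Sym2.mem_iff_exists.mp hae
      have hedge : s(a, b) ∈ G.edgeSet := hmatch.1 _ heM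
      exact ⟨b, ⟨_, heM, by simp⟩, hedge⟩
    -- the key structural fact coming from maximality
    have FACT : ∀ x y : V, G.Adj x y → x ∉ mVerts M → y ∉ mVerts M →
        ∃ a z b w : V, a ∈ mVerts M ∧ b ∈ mVerts M ∧ (z = x ∨ z = y) ∧ (w = x ∨ w = y) ∧
          G.Adj a z ∧ G.Adj b w ∧ (a, z) ≠ (b, w) := by
      intro x y hxy hx hy
      have hxyne : x ≠ y := G.ne_of_adj hxy
      set M' : Finset (Sym2 V) := insert s(x, y) M with hM'
      have hnotmem : s(x, y) ∉ M := fun hmem => hx ⟨_, hmem, by simp⟩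
      have hcardM' : M'.card = M.card + 1 := Finset.card_insert_of_notMem hnotmem
      have hmatch' : IsMatchingSet G M' := by
        constructor
        · intro e he
          rcases Finset.mem_insert.mp he with rfl | he
          · exact G.mem_edgeSet.mpr hxy
          · exact hmatch.1 e he
        · intro e he f hf hef v hv hvf
          rcases Finset.mem_insert.mp he with rfl | he'
          · rcases Finset.mem_insert.mp hf with rfl | hf'
            · exact hef rfl
            · rcases Sym2.mem_iff.mp hv with rfl | rfl
              · exact hx ⟨f, hf', hvf⟩
              · exact hy ⟨f, hf', hvf⟩
          · rcases Finset.mem_insert.mp hf with rfl | hf'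
            · rcases Sym2.mem_iff.mp hvf with rfl | rfl
              · exact hx ⟨e, he', hv⟩
              · exact hy ⟨e, he', hv⟩
            · exact hmatch.2 e he' f hf' hef v hv hvf
      have hverts' : ∀ u : V, u ∈ mVerts M' ↔ (u = x ∨ u = y ∨ u ∈ mVerts M) := by
        intro u
        constructor
        · rintro ⟨e, heM, hue⟩
          rcases Finset.mem_insert.mp heM with rfl | heM
          · rcases Sym2.mem_iff.mp hue with h | h
            · exact Or.inl h
            · exact Or.inr (Or.inl h)
          · exact Or.inr (Or.inr ⟨e, heM, hue⟩)
        · rintro (h | h | ⟨e, heM, hue⟩)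
          · exact ⟨s(x, y), Finset.mem_insert_self _ _, by simp [h]⟩
          · exact ⟨s(x, y), Finset.mem_insert_self _ _, by simp [h]⟩
          · exact ⟨e, Finset.mem_insert_of_mem heM, hue⟩
      have hnc : ¬ NoCycleIn G (mVerts M') := by
        intro hN
        have hmem' : M' ∈ Fam := by
          rw [hFam, Finset.mem_filter]
          exact ⟨Finset.mem_univ _, hmatch', hN⟩
        have := hMax M' hmem'
        omega
      unfold NoCycleIn at hnc
      push_neg at hnc
      obtain ⟨v, c, hc, hsub⟩ := hnc
      have hsub' : ∀ u ∈ c.support, u = x ∨ u = y ∨ u ∈ mVerts M := by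
        intro u hu
        exact (hverts' u).mp (hsub u hu)
      by_cases hxs : x ∈ c.support <;> by_cases hys : y ∈ c.support
      · -- both x and y on the cycle
        obtain ⟨a1, a2, ha12, hadj1, hadj2, hm1, hm2⟩ := cycle_two_nbrs hc hxs
        obtain ⟨b1, b2, hb12, hbadj1, hbadj2, hbm1, hbm2⟩ := cycle_two_nbrs hc hys
        obtain ⟨a, hadja, hma, hay⟩ : ∃ a, G.Adj x a ∧ a ∈ c.support ∧ a ≠ y := by
          by_cases h1 : a1 = y
          · exact ⟨a2, hadj2, hm2, fun h2 => ha12 (h1.trans h2.symm)⟩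
          · exact ⟨a1, hadj1, hm1, h1⟩
        obtain ⟨b, hadjb, hmb, hbx⟩ : ∃ b, G.Adj y b ∧ b ∈ c.support ∧ b ≠ x := by
          by_cases h1 : b1 = x
          · exact ⟨b2, hbadj2, hbm2, fun h2 => hb12 (h1.trans h2.symm)⟩
          · exact ⟨b1, hbadj1, hbm1, h1⟩
        have hacov : a ∈ mVerts M := by
          rcases hsub' a hma with rfl | rfl | h
          · exact absurd rfl (G.ne_of_adj hadja).symm
          · exact absurd rfl hay
          · exact h
        have hbcov : b ∈ mVerts M := by
          rcases hsub' b hmb with rfl | rfl | h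
          · exact absurd rfl hbx
          · exact absurd rfl (G.ne_of_adj hadjb).symm
          · exact h
        exact ⟨a, x, b, y, hacov, hbcov, Or.inl rfl, Or.inr rfl, hadja.symm, hadjb.symm,
          fun hpq => hxyne (congrArg Prod.snd hpq)⟩
      · -- only x on the cycle
        obtain ⟨a1, a2, ha12, hadj1, hadj2, hm1, hm2⟩ := cycle_two_nbrs hc hxs
        have hcov : ∀ a', G.Adj x a' → a' ∈ c.support → a' ∈ mVerts M := by
          intro a' hadj hmem
          rcases hsub' a' hmem with rfl | rfl | h
          · exact absurd rfl (G.ne_of_adj hadj).symm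
          · exact absurd hmem hys
          · exact h
        exact ⟨a1, x, a2, x, hcov a1 hadj1 hm1, hcov a2 hadj2 hm2, Or.inl rfl, Or.inl rfl,
          hadj1.symm, hadj2.symm, fun hpq => ha12 (congrArg Prod.fst hpq)⟩
      · -- only y on the cycle
        obtain ⟨b1, b2, hb12, hbadj1, hbadj2, hbm1, hbm2⟩ := cycle_two_nbrs hc hys
        have hcov : ∀ b', G.Adj y b' → b' ∈ c.support → b' ∈ mVerts M := by
          intro b' hadj hmem
          rcases hsub' b' hmem with rfl | rfl | h
          · exact absurd hmem hxs
          · exact absurd rfl (G.ne_of_adj hadj).symm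
          · exact h
        exact ⟨b1, y, b2, y, hcov b1 hbadj1 hbm1, hcov b2 hbadj2 hbm2, Or.inr rfl, Or.inr rfl,
          hbadj1.symm, hbadj2.symm, fun hpq => hb12 (congrArg Prod.fst hpq)⟩
      · -- the cycle avoids both x and y : contradiction with acyclicity of M
        exfalso
        refine hA v c hc ?_
        intro u hu
        rcases hsub' u hu with rfl | rfl | h
        · exact absurd hu hxs
        · exact absurd hu hys
        · exact h
    -- ==================== the counting ====================
    set D : Finset (V × V) := Finset.univ.filter (fun p => G.Adj p.1 p.2) with hD
    have hDcard : D.card = 2 * m := by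
      have h1 : D.card = ∑ v : V, G.degree v := by
        rw [hD, Finset.card_eq_sum_card_fiberwise (f := Prod.fst) (t := Finset.univ)
          (fun p _ => Finset.mem_univ _)]
        refine Finset.sum_congr rfl ?_
        intro v _
        rw [← SimpleGraph.card_neighborFinset_eq_degree]
        apply Finset.card_bij (fun p _ => p.2)
        · rintro ⟨p1, p2⟩ hp
          simp only [Finset.mem_filter, Finset.mem_univ, true_and] at hp
          rw [SimpleGraph.mem_neighborFinset]
          rcases hp with ⟨hadj, rfl⟩
          exact hadj
        · rintro ⟨p1, p2⟩ hp ⟨q1, q2⟩ hq hpq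
          simp only [Finset.mem_filter, Finset.mem_univ, true_and] at hp hq
          simp only at hpq
          rcases hp with ⟨-, rfl⟩
          rcases hq with ⟨-, rfl⟩
          simp [hpq]
        · intro w hw
          rw [SimpleGraph.mem_neighborFinset] at hw
          exact ⟨(v, w), by simp [hw], rfl⟩
      rw [h1, SimpleGraph.sum_degrees_eq_twice_card_edges, hm]
    -- the anchor-choice function
    obtain ⟨pk, hpk⟩ : ∃ pk : Sym2 V → (V × V) × (V × V), ∀ x y : V,
        G.Adj x y → x ∉ mVerts M → y ∉ mVerts M →
          (pk s(x, y)).1.1 ∈ mVerts M ∧ (pk s(x, y)).2.1 ∈ mVerts M ∧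
          ((pk s(x, y)).1.2 = x ∨ (pk s(x, y)).1.2 = y) ∧
          ((pk s(x, y)).2.2 = x ∨ (pk s(x, y)).2.2 = y) ∧
          G.Adj (pk s(x, y)).1.1 (pk s(x, y)).1.2 ∧
          G.Adj (pk s(x, y)).2.1 (pk s(x, y)).2.2 ∧ (pk s(x, y)).1 ≠ (pk s(x, y)).2 := by
      refine ⟨fun e => if h : (∃ pr : (V × V) × (V × V),
          pr.1.1 ∈ mVerts M ∧ pr.2.1 ∈ mVerts M ∧ pr.1.2 ∈ e ∧ pr.2.2 ∈ e ∧
          G.Adj pr.1.1 pr.1.2 ∧ G.Adj pr.2.1 pr.2.2 ∧ pr.1 ≠ pr.2) then h.choose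
        else default, ?_⟩
      intro x y hxy hx hy
      have hQ : (∃ pr : (V × V) × (V × V),
          pr.1.1 ∈ mVerts M ∧ pr.2.1 ∈ mVerts M ∧ pr.1.2 ∈ s(x, y) ∧ pr.2.2 ∈ s(x, y) ∧
          G.Adj pr.1.1 pr.1.2 ∧ G.Adj pr.2.1 pr.2.2 ∧ pr.1 ≠ pr.2) := by
        obtain ⟨a, z, b, w, ha, hb, hz, hw, haz, hbw, hne'⟩ := FACT x y hxy hx hy
        exact ⟨((a, z), (b, w)), ha, hb, by rcases hz with rfl | rfl <;> simp,
          by rcases hw with rfl | rfl <;> simp, haz, hbw, hne'⟩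
      simp only [dif_pos hQ]
      obtain ⟨h1, h2, h3, h4, h5, h6, h7⟩ := hQ.choose_spec
      rw [Sym2.mem_iff] at h3 h4
      exact ⟨h1, h2, h3, h4, h5, h6, h7⟩
    -- the uncovered-uncovered shape of the charging map
    have hphi3 : ∀ x y : V, G.Adj x y → x ∉ mVerts M → y ∉ mVerts M →
        ∃ α ζ ω : V, phiAux (mVerts M) pk (x, y) = (α, ζ, some (some ω)) ∧ α ∈ mVerts M ∧
          G.Adj α ζ ∧ s(ζ, ω) = s(x, y) ∧ (ζ = x ∨ ζ = y) ∧ (ω = x ∨ ω = y) := by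
      intro x y hxy hx hy
      obtain ⟨ha, hb, hz, hw, haz, hbw, hnepair⟩ := hpk x y hxy hx hy
      by_cases hzw : (pk s(x, y)).1.2 = (pk s(x, y)).2.2
      · by_cases hxz : x = (pk s(x, y)).1.2
        · refine ⟨(pk s(x, y)).1.1, x, y, phiAux_3a hx hy hzw hxz, ha, ?_,
            rfl, Or.inl rfl, Or.inr rfl⟩
          have h := haz; rw [← hxz] at h; exact h
        · have hzy : (pk s(x, y)).1.2 = y := by
            rcases hz with h | h
            · exact absurd h.symm hxz
            · exact h
          refine ⟨(pk s(x, y)).2.1, y, x, phiAux_3b hx hy hzw hxz, hb, ?_,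
            Sym2.eq_swap, Or.inr rfl, Or.inl rfl⟩
          have hwy : (pk s(x, y)).2.2 = y := by rw [← hzw, hzy]
          have h := hbw; rw [hwy] at h; exact h
      · by_cases hxz : x = (pk s(x, y)).1.2
        · refine ⟨(pk s(x, y)).1.1, x, y, phiAux_4a hx hy hzw hxz, ha, ?_,
            rfl, Or.inl rfl, Or.inr rfl⟩
          have h := haz; rw [← hxz] at h; exact h
        · have hzy : (pk s(x, y)).1.2 = y := by
            rcases hz with h | h
            · exact absurd h.symm hxz
            · exact h
          have hwx : (pk s(x, y)).2.2 = x := by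
            rcases hw with h | h
            · exact h
            · exact absurd (hzy.trans h.symm) hzw
          refine ⟨(pk s(x, y)).2.1, x, y, phiAux_4b hx hy hzw hxz, hb, ?_,
            rfl, Or.inl rfl, Or.inr rfl⟩
          have h := hbw; rw [hwx] at h; exact h
    -- the two tokens of an uncovered-uncovered edge receive distinct slots
    have hswapne : ∀ x y : V, G.Adj x y → x ∉ mVerts M → y ∉ mVerts M →
        phiAux (mVerts M) pk (x, y) ≠ phiAux (mVerts M) pk (y, x) := by
      intro x y hxy hx hy
      have hxyne : x ≠ y := G.ne_of_adj hxy
      obtain ⟨ha, hb, hz, hw, haz, hbw, hnepair⟩ := hpk x y hxy hx hy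
      have hsw : (s(y, x) : Sym2 V) = s(x, y) := Sym2.eq_swap
      by_cases hzw : (pk s(x, y)).1.2 = (pk s(x, y)).2.2
      · have hzw' : (pk s(y, x)).1.2 = (pk s(y, x)).2.2 := by rw [hsw]; exact hzw
        have hab : (pk s(x, y)).1.1 ≠ (pk s(x, y)).2.1 := by
          intro h
          exact hnepair (Prod.ext h hzw)
        rcases hz with hzx | hzy
        · have e1 : phiAux (mVerts M) pk (x, y) = ((pk s(x, y)).1.1, x, some (some y)) :=
            phiAux_3a hx hy hzw hzx.symm
          have hyz : ¬ y = (pk s(y, x)).1.2 := by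
            rw [hsw, hzx]
            exact fun h => hxyne h.symm
          have e2 : phiAux (mVerts M) pk (y, x) = ((pk s(y, x)).2.1, x, some (some y)) :=
            phiAux_3b hy hx hzw' hyz
          rw [hsw] at e2
          rw [e1, e2]
          intro h
          simp only [Prod.mk.injEq] at h
          exact hab h.1
        · have hxz : ¬ x = (pk s(x, y)).1.2 := by
            rw [hzy]
            exact hxyne
          have e1 : phiAux (mVerts M) pk (x, y) = ((pk s(x, y)).2.1, y, some (some x)) :=
            phiAux_3b hx hy hzw hxz
          have hyz : y = (pk s(y, x)).1.2 := by rw [hsw, hzy]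
          have e2 : phiAux (mVerts M) pk (y, x) = ((pk s(y, x)).1.1, y, some (some x)) :=
            phiAux_3a hy hx hzw' hyz
          rw [hsw] at e2
          rw [e1, e2]
          intro h
          simp only [Prod.mk.injEq] at h
          exact hab h.1.symm
      · have hzw' : ¬ (pk s(y, x)).1.2 = (pk s(y, x)).2.2 := by rw [hsw]; exact hzw
        have e1 : (phiAux (mVerts M) pk (x, y)).2.1 = x := by
          by_cases hxz : x = (pk s(x, y)).1.2
          · rw [phiAux_4a hx hy hzw hxz]
          · rw [phiAux_4b hx hy hzw hxz]
        have e2 : (phiAux (mVerts M) pk (y, x)).2.1 = y := by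
          by_cases hyz : y = (pk s(y, x)).1.2
          · rw [phiAux_4a hy hx hzw' hyz]
          · rw [phiAux_4b hy hx hzw' hyz]
        intro h
        rw [h, e2] at e1
        exact hxyne e1.symm
    -- the slots
    set SL : Finset (V × V × Option (Option V)) := Finset.univ.filter (fun t =>
      t.1 ∈ mVerts M ∧ G.Adj t.1 t.2.1 ∧
      (t.2.2 = some none → t.2.1 ∉ mVerts M) ∧
      (∀ w : V, t.2.2 = some (some w) → t.2.1 ∉ mVerts M ∧ G.Adj t.2.1 w ∧ w ≠ t.1)) with hSL
    -- the charging map sends tokens to slots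
    have mapsTo : ∀ p ∈ D, phiAux (mVerts M) pk p ∈ SL := by
      rintro ⟨x, y⟩ hp
      rw [hD, Finset.mem_filter] at hp
      have hadj : G.Adj x y := hp.2
      rw [hSL, Finset.mem_filter]
      refine ⟨Finset.mem_univ _, ?_⟩
      by_cases cx : x ∈ mVerts M
      · rw [phiAux_one cx]
        exact ⟨cx, hadj, by simp, by simp⟩
      · by_cases cy : y ∈ mVerts M
        · rw [phiAux_two cx cy]
          exact ⟨cy, hadj.symm, fun _ => cx, by simp⟩
        · obtain ⟨α, ζ, ω, he, hα, hαζ, hsym, hζ, hω⟩ := hphi3 x y hadj cx cy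
          rw [he]
          have hζu : ζ ∉ mVerts M := by rcases hζ with rfl | rfl <;> assumption
          have hωu : ω ∉ mVerts M := by rcases hω with rfl | rfl <;> assumption
          have hζω : G.Adj ζ ω := by
            rcases Sym2.eq_iff.mp hsym with ⟨h1, h2⟩ | ⟨h1, h2⟩
            · rw [h1, h2]; exact hadj
            · rw [h1, h2]; exact hadj.symm
          refine ⟨hα, hαζ, by simp, ?_⟩
          intro w' hw'
          simp only [Option.some.injEq] at hw'
          rw [← hw']
          exact ⟨hζu, hζω, fun h => hωu (h ▸ hα)⟩
    -- the charging map is injective on tokens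
    have injOn : Set.InjOn (phiAux (mVerts M) pk) ↑D := by
      have shape : ∀ x y : V, G.Adj x y →
          (x ∈ mVerts M ∧ phiAux (mVerts M) pk (x, y) = (x, y, none)) ∨
          (x ∉ mVerts M ∧ y ∈ mVerts M ∧ phiAux (mVerts M) pk (x, y) = (y, x, some none)) ∨
          (x ∉ mVerts M ∧ y ∉ mVerts M ∧ ∃ α ζ ω : V,
            phiAux (mVerts M) pk (x, y) = (α, ζ, some (some ω)) ∧ s(ζ, ω) = s(x, y)) := by
        intro x y hadj
        by_cases cx : x ∈ mVerts M
        · exact Or.inl ⟨cx, phiAux_one cx⟩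
        · by_cases cy : y ∈ mVerts M
          · exact Or.inr (Or.inl ⟨cx, cy, phiAux_two cx cy⟩)
          · obtain ⟨α, ζ, ω, he, _, _, hsym, _, _⟩ := hphi3 x y hadj cx cy
            exact Or.inr (Or.inr ⟨cx, cy, α, ζ, ω, he, hsym⟩)
      rintro ⟨x, y⟩ hp ⟨x', y'⟩ hq heq
      rw [Finset.mem_coe, hD, Finset.mem_filter] at hp hq
      have hadj : G.Adj x y := hp.2
      have hadj' : G.Adj x' y' := hq.2
      have heq0 := heq
      rcases shape x y hadj with ⟨cx, e⟩ | ⟨cx, cy, e⟩ | ⟨cx, cy, α, ζ, ω, e, hsym⟩ <;>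
        rcases shape x' y' hadj' with ⟨cx', e'⟩ | ⟨cx', cy', e'⟩ | ⟨cx', cy', α', ζ', ω', e', hsym'⟩ <;>
        rw [e, e'] at heq
      · simp only [Prod.mk.injEq] at heq
        simp [heq.1, heq.2.1]
      · simp at heq
      · simp at heq
      · simp at heq
      · simp only [Prod.mk.injEq] at heq
        simp [heq.2.1, heq.1]
      · simp at heq
      · simp at heq
      · simp at heq
      · simp only [Prod.mk.injEq, Option.some.injEq] at heq
        obtain ⟨-, hζ, hω⟩ := heq
        rw [hζ, hω] at hsym
        rw [hsym] at hsym'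
        rcases Sym2.eq_iff.mp hsym' with ⟨h1, h2⟩ | ⟨h1, h2⟩
        · simp [h1, h2]
        · exfalso
          rw [← h1, ← h2] at heq0
          exact hswapne x y hadj cx cy heq0
    have hDSL : D.card ≤ SL.card := Finset.card_le_card_of_injOn _ mapsTo injOn
    -- counting the slots
    set cov : Finset V := Finset.univ.filter (fun v => v ∈ mVerts M) with hcov
    have hcovcard : cov.card ≤ 2 * M.card := by
      have hsub : cov ⊆ M.biUnion (fun e => Finset.univ.filter (fun v => v ∈ e)) := by
        intro v hv
        rw [hcov, Finset.mem_filter] at hv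
        obtain ⟨-, e, heM, hve⟩ := hv
        rw [Finset.mem_biUnion]
        exact ⟨e, heM, by simp [hve]⟩
      refine le_trans (Finset.card_le_card hsub) (le_trans (Finset.card_biUnion_le) ?_)
      have : ∀ e ∈ M, (Finset.univ.filter (fun v => v ∈ e)).card ≤ 2 := by
        intro e _
        induction e with
        | _ aa bb =>
          refine le_trans (Finset.card_le_card (fun v hv => ?_))
            (le_trans (Finset.card_insert_le aa {bb}) (by simp))
          rw [Finset.mem_filter] at hv
          rcases Sym2.mem_iff.mp hv.2 with rfl | rfl
          · exact Finset.mem_insert_self _ _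
          · exact Finset.mem_insert_of_mem (Finset.mem_singleton_self _)
      calc ∑ e ∈ M, (Finset.univ.filter (fun v => v ∈ e)).card ≤ ∑ e ∈ M, 2 :=
            Finset.sum_le_sum this
        _ = 2 * M.card := by rw [Finset.sum_const, smul_eq_mul, mul_comm]
    set inner : V → V → Finset (V × V × Option (Option V)) := fun a z =>
      if z ∈ mVerts M then {(a, z, (none : Option (Option V)))}
      else insert (a, z, (none : Option (Option V)))
        (insert (a, z, some none)
          (((G.neighborFinset z).erase a).image (fun w => (a, z, some (some w)))))
      with hinner
    have hSLsub : SL ⊆ cov.biUnion (fun a => (G.neighborFinset a).biUnion (inner a)) := by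
      rintro ⟨a, z, o⟩ ht
      rw [hSL, Finset.mem_filter] at ht
      obtain ⟨-, ha, hadj, h2, h3⟩ := ht
      rw [Finset.mem_biUnion]
      refine ⟨a, by rw [hcov, Finset.mem_filter]; exact ⟨Finset.mem_univ _, ha⟩, ?_⟩
      rw [Finset.mem_biUnion]
      refine ⟨z, (G.mem_neighborFinset _ _).mpr hadj, ?_⟩
      rw [hinner]
      dsimp only
      by_cases hz : z ∈ mVerts M
      · rw [if_pos hz]
        cases o with
        | none => simp
        | some o2 =>
          cases o2 with
          | none => exact absurd hz (h2 rfl)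
          | some w => exact absurd hz ((h3 w rfl).1)
      · rw [if_neg hz]
        cases o with
        | none => exact Finset.mem_insert_self _ _
        | some o2 =>
          cases o2 with
          | none => exact Finset.mem_insert_of_mem (Finset.mem_insert_self _ _)
          | some w =>
            refine Finset.mem_insert_of_mem (Finset.mem_insert_of_mem ?_)
            rw [Finset.mem_image]
            obtain ⟨-, hzw, hwa⟩ := h3 w rfl
            exact ⟨w, Finset.mem_erase.mpr ⟨hwa, (G.mem_neighborFinset _ _).mpr hzw⟩, rfl⟩
    have hperA : ∀ a ∈ cov, ((G.neighborFinset a).biUnion (inner a)).card ≤ Δ ^ 2 := by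
      intro a hacov
      rw [hcov, Finset.mem_filter] at hacov
      have ha : a ∈ mVerts M := hacov.2
      refine le_trans Finset.card_biUnion_le ?_
      have hb : ∀ z ∈ G.neighborFinset a,
          (inner a z).card ≤ (if z ∈ mVerts M then 1 else Δ + 1) := by
        intro z hz
        rw [hinner]
        dsimp only
        by_cases hzc : z ∈ mVerts M
        · rw [if_pos hzc, if_pos hzc]
          simp
        · rw [if_neg hzc, if_neg hzc]
          have h1 : (((G.neighborFinset z).erase a).image
              (fun w => (a, z, some (some w)))).card ≤ G.degree z - 1 := by
            refine le_trans Finset.card_image_le ?_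
            rw [Finset.card_erase_of_mem
              ((G.mem_neighborFinset _ _).mpr ((G.mem_neighborFinset _ _).mp hz).symm),
              SimpleGraph.card_neighborFinset_eq_degree]
          have h2 : 1 ≤ G.degree z := by
            rw [← SimpleGraph.card_neighborFinset_eq_degree]
            refine Finset.card_pos.mpr ⟨a, ?_⟩
            exact (G.mem_neighborFinset _ _).mpr ((G.mem_neighborFinset _ _).mp hz).symm
          have h3 := hdeg z
          have c1 := Finset.card_insert_le (a, z, (none : Option (Option V)))
            (insert (a, z, some none)
              (((G.neighborFinset z).erase a).image (fun w => (a, z, some (some w)))))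
          have c2 := Finset.card_insert_le ((a, z, some none) : V × V × Option (Option V))
            (((G.neighborFinset z).erase a).image (fun w => (a, z, some (some w))))
          omega
      refine le_trans (Finset.sum_le_sum hb) ?_
      rw [Finset.sum_ite, Finset.sum_const, Finset.sum_const, smul_eq_mul, smul_eq_mul, mul_one]
      have hst : ((G.neighborFinset a).filter (fun z => z ∈ mVerts M)).card
          + ((G.neighborFinset a).filter (fun z => ¬ z ∈ mVerts M)).card = G.degree a := by
        rw [Finset.card_filter_add_card_filter_not,
          SimpleGraph.card_neighborFinset_eq_degree]
      have hs1 : 1 ≤ ((G.neighborFinset a).filter (fun z => z ∈ mVerts M)).card := by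
        obtain ⟨b, hbM, hab⟩ := hpartner a ha
        refine Finset.card_pos.mpr ⟨b, ?_⟩
        rw [Finset.mem_filter]
        exact ⟨(G.mem_neighborFinset _ _).mpr hab, hbM⟩
      have hda := hdeg a
      rw [pow_two]
      set s₁ := ((G.neighborFinset a).filter (fun z => z ∈ mVerts M)).card
      set t := ((G.neighborFinset a).filter (fun z => ¬ z ∈ mVerts M)).card
      have ht1 : t + 1 ≤ Δ := by omega
      nlinarith [mul_le_mul_left ht1 Δ]
    have hSLcard : SL.card ≤ 2 * M.card * Δ ^ 2 := by
      refine le_trans (Finset.card_le_card hSLsub) (le_trans Finset.card_biUnion_le ?_)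
      calc ∑ a ∈ cov, ((G.neighborFinset a).biUnion (inner a)).card
          ≤ ∑ _a ∈ cov, Δ ^ 2 := Finset.sum_le_sum hperA
        _ = cov.card * Δ ^ 2 := by rw [Finset.sum_const, smul_eq_mul]
        _ ≤ 2 * M.card * Δ ^ 2 := Nat.mul_le_mul_right _ hcovcard
    have h2 : 2 * m ≤ 2 * (Δ ^ 2 * M.card) := by
      calc 2 * m = D.card := hDcard.symm
        _ ≤ SL.card := hDSL
        _ ≤ 2 * M.card * Δ ^ 2 := hSLcard
        _ = 2 * (Δ ^ 2 * M.card) := by ring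
    exact Nat.le_of_mul_le_mul_left h2 (by norm_num)
end

section
/- Let G be a graph, M an acyclic matching in G, V_M the vertices covered by M, N_M the vertices outside V_M with a neighbor in V_M, and G' the graph obtained from G by deleting V_M ∪ N_M. If M' is any acyclic matching in G', then M ∪ M' is an acyclic matching in G of size |M| + |M'|. -/
open SimpleGraph

/-- A walk in an induced subgraph whose support lies in a smaller set lifts to the
smaller induced subgraph. -/
lemma lift_walk_aux {V : Type*} {G : SimpleGraph V} {A S : Set V} (h : A ⊆ S) :
    ∀ {u v : ↥S} (p : (G.induce S).Walk u v) (hp : ∀ x ∈ p.support, x.val ∈ A),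
    ∃ q : (G.induce A).Walk ⟨u.val, hp u p.start_mem_support⟩ ⟨v.val, hp v p.end_mem_support⟩,
      q.map (G.induceHomOfLE h).toHom = p := by
  intro u v p
  induction p with
  | nil => intro hp; exact ⟨SimpleGraph.Walk.nil, rfl⟩
  | cons ha p ih =>
    intro hp
    obtain ⟨q, hq⟩ := ih (fun x hx => hp x (by simp [hx]))
    refine ⟨SimpleGraph.Walk.cons ?_ q, ?_⟩
    · exact ha
    · exact congrArg (SimpleGraph.Walk.cons ha) hq

/-- The support of a walk stays on one "side" if adjacency preserves the side. -/
lemma walk_side_aux {V : Type*} {G : SimpleGraph V} {A S : Set V}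
    (hstep : ∀ x y : ↥S, (G.induce S).Adj x y → x.val ∈ A → y.val ∈ A) :
    ∀ {u v : ↥S} (p : (G.induce S).Walk u v), u.val ∈ A → ∀ x ∈ p.support, x.val ∈ A := by
  intro u v p
  induction p with
  | nil => intro hu x hx; simp at hx; subst hx; exact hu
  | @cons a b c ha p ih =>
    intro hu x hx
    rw [SimpleGraph.Walk.support_cons, List.mem_cons] at hx
    rcases hx with rfl | hx
    · exact hu
    · exact ih (hstep a b ha hu) x hx

theorem acyclicMatching_union {V : Type*} [Fintype V] [DecidableEq V] (G G' : SimpleGraph V)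
    (M M' : Finset (Sym2 V)) (hM : IsAcyclicMatching G M)
    (hG' : ∀ a b : V, G'.Adj a b ↔ G.Adj a b ∧
      a ∉ mVerts M ∪ {w : V | w ∉ mVerts M ∧ ∃ x ∈ mVerts M, G.Adj w x} ∧
      b ∉ mVerts M ∪ {w : V | w ∉ mVerts M ∧ ∃ x ∈ mVerts M, G.Adj w x})
    (hM' : IsAcyclicMatching G' M') :
    IsAcyclicMatching G (M ∪ M') ∧ (M ∪ M').card = M.card + M'.card := by
  -- every vertex covered by M' avoids mVerts M and its neighborhood
  have hBnot : ∀ b ∈ mVerts M',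
      b ∉ mVerts M ∪ {w : V | w ∉ mVerts M ∧ ∃ x ∈ mVerts M, G.Adj w x} := by
    rintro b ⟨e, heM', hbe⟩
    have he : e ∈ G'.edgeSet := hM'.1.1 e heM'
    induction e using Sym2.ind with
    | _ x y =>
      rw [SimpleGraph.mem_edgeSet, hG'] at he
      rw [Sym2.mem_iff] at hbe
      rcases hbe with rfl | rfl
      · exact he.2.1
      · exact he.2.2
  -- edges of M' are edges of G
  have hM'G : ∀ e ∈ M', e ∈ G.edgeSet := by
    intro e he
    have h := hM'.1.1 e he
    induction e using Sym2.ind with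
    | _ x y =>
      rw [SimpleGraph.mem_edgeSet] at h ⊢
      exact ((hG' x y).mp h).1
  -- covered vertices of M' avoid covered vertices of M
  have hdisjV : ∀ b ∈ mVerts M', b ∉ mVerts M := by
    intro b hb hbA
    exact hBnot b hb (Set.mem_union_left _ hbA)
  -- no edges of G between mVerts M and mVerts M'
  have hcross : ∀ a b : V, a ∈ mVerts M → b ∈ mVerts M' → ¬ G.Adj a b := by
    intro a b ha hb hab
    exact hBnot b hb (Set.mem_union_right _ ⟨hdisjV b hb, a, ha, hab.symm⟩)
  -- disjointness of the edge sets
  have hdisjE : Disjoint M M' := by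
    rw [Finset.disjoint_left]
    intro e he he'
    induction e using Sym2.ind with
    | _ x y => exact hdisjV x ⟨s(x, y), he', by simp⟩ ⟨s(x, y), he, by simp⟩
  have hmv : mVerts (M ∪ M') = mVerts M ∪ mVerts M' := by
    ext v
    simp only [mVerts, Set.mem_setOf_eq, Set.mem_union, Finset.mem_union]
    constructor
    · rintro ⟨e, (he | he), hv⟩
      · exact Or.inl ⟨e, he, hv⟩
      · exact Or.inr ⟨e, he, hv⟩
    · rintro (⟨e, he, hv⟩ | ⟨e, he, hv⟩)
      · exact ⟨e, Or.inl he, hv⟩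
      · exact ⟨e, Or.inr he, hv⟩
  refine ⟨⟨⟨?_, ?_⟩, ?_⟩, Finset.card_union_of_disjoint hdisjE⟩
  · -- edges
    intro e he
    rcases Finset.mem_union.mp he with he | he
    · exact hM.1.1 e he
    · exact hM'G e he
  · -- pairwise disjoint
    intro e he f hf hef v hve hvf
    rcases Finset.mem_union.mp he with he | he <;> rcases Finset.mem_union.mp hf with hf | hf
    · exact hM.1.2 e he f hf hef v hve hvf
    · exact hdisjV v ⟨f, hf, hvf⟩ ⟨e, he, hve⟩
    · exact hdisjV v ⟨e, he, hve⟩ ⟨f, hf, hvf⟩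
    · exact hM'.1.2 e he f hf hef v hve hvf
  · -- acyclicity
    rw [hmv]
    intro v c hc
    have hv2 := v.2
    rw [Set.mem_union] at hv2
    -- the induced graph on G' covered vertices is acyclic too (transfer from G')
    have hG'acyc : (G.induce (mVerts M')).IsAcyclic := by
      have : G.induce (mVerts M') = G'.induce (mVerts M') := by
        ext ⟨x, hx⟩ ⟨y, hy⟩
        simp only [comap_adj, Function.Embedding.coe_subtype]
        rw [hG']
        exact ⟨fun h => ⟨h, hBnot x hx, hBnot y hy⟩, fun h => h.1⟩
      rw [this]
      exact hM'.2
    rcases hv2 with hvA | hvB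
    · -- all support in mVerts M
      have hsup : ∀ x ∈ c.support, x.val ∈ mVerts M := by
        refine walk_side_aux ?_ c hvA
        intro x y hxy hxA
        have hy2 := y.2
        rw [Set.mem_union] at hy2
        rcases hy2 with h | h
        · exact h
        · exact absurd (hxy : G.Adj x.val y.val) (hcross x.val y.val hxA h)
      have hsub : mVerts M ⊆ mVerts M ∪ mVerts M' := Set.subset_union_left
      obtain ⟨q, hq⟩ := lift_walk_aux hsub c hsup
      have hqc : q.IsCycle := by
        refine (SimpleGraph.Walk.map_isCycle_iff_of_injective
          (f := (G.induceHomOfLE hsub).toHom)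
          (by exact (G.induceHomOfLE hsub).injective)).mp ?_
        rw [hq]; exact hc
      exact hM.2 q hqc
    · -- all support in mVerts M'
      have hsup : ∀ x ∈ c.support, x.val ∈ mVerts M' := by
        refine walk_side_aux ?_ c hvB
        intro x y hxy hxB
        have hy2 := y.2
        rw [Set.mem_union] at hy2
        rcases hy2 with h | h
        · exact absurd (hxy : G.Adj x.val y.val).symm (hcross y.val x.val h hxB)
        · exact h
      have hsub : mVerts M' ⊆ mVerts M ∪ mVerts M' := Set.subset_union_right
      obtain ⟨q, hq⟩ := lift_walk_aux hsub c hsup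
      have hqc : q.IsCycle := by
        refine (SimpleGraph.Walk.map_isCycle_iff_of_injective
          (f := (G.induceHomOfLE hsub).toHom)
          (by exact (G.induceHomOfLE hsub).injective)).mp ?_
        rw [hq]; exact hc
      exact hG'acyc q hqc
end

section
/- Let G be the graph obtained by attaching ⌊Δ/2⌋ new pendant vertices to every vertex of a complete graph on ⌈Δ/2⌉ + 1 vertices. Then G has maximum degree Δ, has n = (⌈Δ/2⌉+1)(⌊Δ/2⌋+1) vertices, and its maximum induced matching has size exactly 1 = n/((⌊Δ/2⌋+1)(⌈Δ/2⌉+1)). -/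
open SimpleGraph

/-- The graph obtained by attaching `⌊Δ/2⌋` pendant vertices to every vertex of a
complete graph on `⌈Δ/2⌉ + 1` vertices. The vertex `(i, 0)` is the `i`-th clique vertex,
and `(i, j)` for `j ≠ 0` is a pendant vertex attached to `(i, 0)`. -/
def coronaGraph (Δ : ℕ) : SimpleGraph (Fin ((Δ + 1) / 2 + 1) × Fin (Δ / 2 + 1)) :=
  SimpleGraph.fromRel (fun a b =>
    (a.2 : ℕ) = 0 ∧ (((b.2 : ℕ) = 0 ∧ a.1 ≠ b.1) ∨ (a.1 = b.1 ∧ (b.2 : ℕ) ≠ 0)))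

lemma corona_adj {Δ : ℕ} (v w : Fin ((Δ + 1) / 2 + 1) × Fin (Δ / 2 + 1)) :
    (coronaGraph Δ).Adj v w ↔ v ≠ w ∧
      (((v.2 : ℕ) = 0 ∧ (((w.2 : ℕ) = 0 ∧ v.1 ≠ w.1) ∨ (v.1 = w.1 ∧ (w.2 : ℕ) ≠ 0))) ∨
       ((w.2 : ℕ) = 0 ∧ (((v.2 : ℕ) = 0 ∧ w.1 ≠ v.1) ∨ (w.1 = v.1 ∧ (v.2 : ℕ) ≠ 0)))) := by
  simp [coronaGraph, SimpleGraph.fromRel_adj]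

instance (Δ : ℕ) : DecidableRel (coronaGraph Δ).Adj := fun v w =>
  decidable_of_iff _ (corona_adj v w).symm

lemma corona_nbhd (Δ : ℕ) (i : Fin ((Δ + 1) / 2 + 1)) :
    (coronaGraph Δ).neighborFinset (i, (0 : Fin (Δ / 2 + 1))) =
      ((Finset.univ.erase i).image fun a => (a, (0 : Fin (Δ / 2 + 1)))) ∪
      ((Finset.univ.erase (0 : Fin (Δ / 2 + 1))).image fun b => (i, b)) := by
  ext ⟨a, b⟩
  simp only [SimpleGraph.mem_neighborFinset, corona_adj, Finset.mem_union,
    Finset.mem_image, Finset.mem_erase, Finset.mem_univ, and_true, Prod.mk.injEq,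
    ne_eq, Prod.ext_iff]
  constructor
  · rintro ⟨hne, h⟩
    rcases h with ⟨-, ⟨hb, hia⟩ | ⟨hia, hb⟩⟩ | ⟨hb, ⟨-, hia⟩ | ⟨hia, hb0⟩⟩
    · exact Or.inl ⟨a, fun h => hia h.symm, rfl, by apply Fin.ext; simp [hb]⟩
    · exact Or.inr ⟨b, fun h => hb (by simp [h]), hia, rfl⟩
    · exact Or.inl ⟨a, hia, rfl, by apply Fin.ext; simp [hb]⟩
    · simp at hb0
  · rintro (⟨a', ha', rfl, rfl⟩ | ⟨b', hb', rfl, rfl⟩)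
    · exact ⟨fun h => ha' h.1.symm,
        Or.inl ⟨by simp, Or.inl ⟨by simp, fun h => ha' h.symm⟩⟩⟩
    · refine ⟨fun h => hb' h.2.symm, Or.inl ⟨by simp, Or.inr ⟨rfl, ?_⟩⟩⟩
      exact fun h => hb' (by apply Fin.ext; simpa using h)

lemma corona_deg (Δ : ℕ) (i : Fin ((Δ + 1) / 2 + 1)) :
    ((coronaGraph Δ).neighborSet (i, (0 : Fin (Δ / 2 + 1)))).ncard = Δ := by
  rw [Set.ncard_eq_toFinset_card', ← SimpleGraph.neighborFinset_def, corona_nbhd]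
  rw [Finset.card_union_of_disjoint, Finset.card_image_of_injective,
    Finset.card_image_of_injective, Finset.card_erase_of_mem (Finset.mem_univ _),
    Finset.card_erase_of_mem (Finset.mem_univ _), Finset.card_univ, Finset.card_univ,
    Fintype.card_fin, Fintype.card_fin]
  · omega
  · exact fun x y h => (Prod.mk.injEq _ _ _ _ ▸ h).2
  · exact fun x y h => (Prod.mk.injEq _ _ _ _ ▸ h).1
  · rw [Finset.disjoint_left]
    rintro ⟨x, y⟩ hx hy
    simp only [Finset.mem_image, Finset.mem_erase, Finset.mem_univ, and_true,
      Prod.mk.injEq] at hx hy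
    obtain ⟨a, ha, rfl, rfl⟩ := hx
    obtain ⟨b, hb, -, h⟩ := hy
    exact hb h

lemma corona_pendant_nbhd (Δ : ℕ) (i : Fin ((Δ + 1) / 2 + 1)) (j : Fin (Δ / 2 + 1))
    (hj : (j : ℕ) ≠ 0) :
    (coronaGraph Δ).neighborSet (i, j) = {(i, (0 : Fin (Δ / 2 + 1)))} := by
  ext ⟨a, b⟩
  simp only [SimpleGraph.mem_neighborSet, corona_adj, Set.mem_singleton_iff, Prod.mk.injEq]
  constructor
  · rintro ⟨hne, ⟨hj0, -⟩ | ⟨hb, ⟨hj0, -⟩ | ⟨hia, -⟩⟩⟩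
    · exact absurd hj0 hj
    · exact absurd hj0 hj
    · exact ⟨hia, by apply Fin.ext; simp [hb]⟩
  · rintro ⟨rfl, rfl⟩
    exact ⟨fun h => hj (by have := congrArg Prod.snd h; simp at this; simp [this]),
      Or.inr ⟨by simp, Or.inr ⟨rfl, hj⟩⟩⟩

lemma edge_clique_vert {Δ : ℕ} (e : Sym2 (Fin ((Δ + 1) / 2 + 1) × Fin (Δ / 2 + 1)))
    (he : e ∈ (coronaGraph Δ).edgeSet) :
    ∃ c, c ∈ e ∧ (c.2 : ℕ) = 0 := by
  induction e using Sym2.ind with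
  | _ a b =>
    rw [SimpleGraph.mem_edgeSet, corona_adj] at he
    rcases he.2 with ⟨h, -⟩ | ⟨h, -⟩
    · exact ⟨a, Sym2.mem_mk_left a b, h⟩
    · exact ⟨b, Sym2.mem_mk_right a b, h⟩


theorem corona_extremal (Δ : ℕ) (hΔ : 2 ≤ Δ) :
    (∀ v, ((coronaGraph Δ).neighborSet v).ncard ≤ Δ) ∧
      (∃ v, ((coronaGraph Δ).neighborSet v).ncard = Δ) ∧
      Fintype.card (Fin ((Δ + 1) / 2 + 1) × Fin (Δ / 2 + 1)) =
        ((Δ + 1) / 2 + 1) * (Δ / 2 + 1) ∧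
      (∃ M, IsInducedMatching (coronaGraph Δ) M ∧ M.card = 1) ∧
      (∀ M, IsInducedMatching (coronaGraph Δ) M → M.card ≤ 1) := by
  refine ⟨?_, ⟨(0, 0), corona_deg Δ 0⟩, by simp, ?_, ?_⟩
  · rintro ⟨i, j⟩
    rcases eq_or_ne (j : ℕ) 0 with hj | hj
    · have : j = 0 := by apply Fin.ext; simpa using hj
      subst this
      exact (corona_deg Δ i).le
    · rw [corona_pendant_nbhd Δ i j hj, Set.ncard_singleton]
      omega
  · -- existence of induced matching of size 1
    set v0 : Fin ((Δ + 1) / 2 + 1) × Fin (Δ / 2 + 1) := (0, 0) with hv0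
    set p0 : Fin ((Δ + 1) / 2 + 1) × Fin (Δ / 2 + 1) := (0, ⟨1, by omega⟩) with hp0
    have hadj : (coronaGraph Δ).Adj v0 p0 := by
      rw [corona_adj]
      exact ⟨by simp [hv0, hp0, Prod.ext_iff, Fin.ext_iff], Or.inl ⟨rfl, Or.inr ⟨rfl, by simp [hp0, Fin.ext_iff]⟩⟩⟩
    refine ⟨{s(v0, p0)}, ⟨⟨?_, ?_⟩, ?_⟩, Finset.card_singleton _⟩
    · intro e he
      rw [Finset.mem_singleton] at he
      subst he
      exact hadj
    · intro e he f hf hne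
      rw [Finset.mem_singleton] at he hf
      exact absurd (he.trans hf.symm) hne
    · intro v w hv hw hvw
      simp only [mVerts, Set.mem_setOf_eq, Finset.mem_singleton, exists_eq_left,
        Sym2.mem_iff] at hv hw
      rw [Finset.mem_singleton]
      rcases hv with rfl | rfl <;> rcases hw with rfl | rfl
      · exact absurd hvw (coronaGraph Δ).irrefl
      · rfl
      · exact Sym2.eq_swap
      · exact absurd hvw (coronaGraph Δ).irrefl
  · -- maximality
    intro M ⟨⟨hE, hD⟩, hI⟩
    rw [Finset.card_le_one]
    intro e he f hf
    obtain ⟨ce, hcee, hce0⟩ := edge_clique_vert e (hE e he)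
    obtain ⟨cf, hcff, hcf0⟩ := edge_clique_vert f (hE f hf)
    by_contra hne
    have hcecf : ce ≠ cf := by
      rintro rfl
      exact hD e he f hf hne ce hcee hcff
    have hadj : (coronaGraph Δ).Adj ce cf := by
      rw [corona_adj]
      refine ⟨hcecf, Or.inl ⟨hce0, Or.inl ⟨hcf0, ?_⟩⟩⟩
      intro h1
      apply hcecf
      apply Prod.ext h1
      apply Fin.ext
      rw [hce0, hcf0]
    have hg : s(ce, cf) ∈ M := hI ce cf ⟨e, he, hcee⟩ ⟨f, hf, hcff⟩ hadj
    have hge : s(ce, cf) = e := by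
      by_contra hge
      exact hD e he _ hg (fun h => hge h.symm) ce hcee (Sym2.mem_mk_left ce cf)
    have hgf : s(ce, cf) = f := by
      by_contra hgf
      exact hD f hf _ hg (fun h => hgf h.symm) cf hcff (Sym2.mem_mk_right ce cf)
    exact hne (hge.symm.trans hgf)
end
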